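/- arXiv:1506.07437 — 5 statements merged into one kernel-verified Lean document; each statement's English description precedes it below -/
import Mathlib

section
/- Let F be a field, q a positive integer, σ : {0,…,q−1} → F an injective function with σ(0) = 0, and 1 ≤ k ≤ q. Then the supplemented Pascal matrix H_{q,k} has the MDS property: every k of its q+1 columns are linearly independent over F. -/
/-- The finite-field binomial entry `f_m(n) = ∏_{i=1}^{m} (σ(n) − σ(i−1))/σ(i)`
(empty product `= 1` for `m = 0`). -/
def pascalEntry {F : Type*} [Field F] (σ : ℕ → F) (m n : ℕ) : F :=
  ∏ i ∈ Finset.range m, (σ n - σ i) / σ (i + 1)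

/-- The truncated Pascal matrix `P_{q,k}` : the `k × q` matrix with entry `f_m(n)`. -/
def truncPascal (F : Type*) [Field F] (σ : ℕ → F) (q k : ℕ) :
    Matrix (Fin k) (Fin q) F :=
  fun m n => pascalEntry σ m n

/-- The supplemented Pascal matrix `H_{q,k}` : `P_{q,k}` with the extra column `e_k`
(a `1` in the last entry, zeros elsewhere) appended. -/
def suppPascal (F : Type*) [Field F] (σ : ℕ → F) (q k : ℕ) :
    Matrix (Fin k) (Fin (q + 1)) F :=
  fun m n =>
    if h : (n : ℕ) < q then truncPascal F σ q k m ⟨n, h⟩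
    else if (m : ℕ) = k - 1 then 1 else 0

open Finset Polynomial Matrix in
lemma pascal_core {F : Type*} [Field F] {q : ℕ} (σ : ℕ → F)
    (hσinj : Set.InjOn σ (Set.Iio q)) (hσ0 : σ 0 = 0)
    (m : ℕ) (hm : m ≤ q) (n : Fin m → ℕ) (hn : ∀ j, n j < q)
    (hninj : Function.Injective n) :
    (Matrix.of fun r j : Fin m => pascalEntry σ r (n j)).det ≠ 0 := by
  have hpmonic : ∀ j : Fin m, (∏ t ∈ range (j : ℕ), (X - C (σ t))).Monic :=
    fun j => monic_prod_of_monic _ _ (fun t _ => monic_X_sub_C _)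
  have hpdeg : ∀ j : Fin m, (∏ t ∈ range (j : ℕ), (X - C (σ t))).natDegree = (j : ℕ) := by
    intro j
    rw [natDegree_prod_of_monic _ _ (fun t _ => monic_X_sub_C _)]
    simp
  have key : (Matrix.of fun r j : Fin m => pascalEntry σ r (n j)) =
      Matrix.diagonal (fun r : Fin m => ∏ i ∈ range (r : ℕ), (σ (i+1))⁻¹) *
      (Matrix.of fun i j : Fin m =>
        (∏ t ∈ range (j : ℕ), (X - C (σ t))).eval (σ (n i)))ᵀ := by
    ext r j
    rw [Matrix.diagonal_mul]
    simp only [Matrix.of_apply, Matrix.transpose_apply, pascalEntry, eval_prod, eval_sub,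
      eval_X, eval_C, div_eq_mul_inv, Finset.prod_mul_distrib]
    ring
  rw [key, Matrix.det_mul, Matrix.det_transpose,
    ← Matrix.det_eval_matrixOfPolynomials_eq_det_vandermonde (fun i => σ (n i)) _ hpdeg hpmonic,
    Matrix.det_diagonal]
  apply mul_ne_zero
  · apply Finset.prod_ne_zero_iff.mpr
    intro r _
    apply Finset.prod_ne_zero_iff.mpr
    intro i hi
    have hi1 : i + 1 < q := by
      have := Finset.mem_range.mp hi
      omega
    apply inv_ne_zero
    intro h0
    have : i + 1 = 0 := hσinj (by simpa using hi1) (by simp; omega) (by rw [h0, hσ0])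
    omega
  · rw [Matrix.det_vandermonde_ne_zero_iff]
    intro a b hab
    exact hninj (hσinj (by simpa using hn a) (by simpa using hn b) hab)


/-- Every `k` columns of the supplemented Pascal matrix `H_{q,k}` are linearly
independent over `F`. -/
theorem suppPascal_MDS (F : Type*) [Field F] (q : ℕ) (hq : 0 < q)
    (σ : ℕ → F) (hσinj : Set.InjOn σ (Set.Iio q)) (hσ0 : σ 0 = 0)
    (k : ℕ) (hk1 : 1 ≤ k) (hkq : k ≤ q) :
    ∀ c : Fin k → Fin (q + 1), Function.Injective c →
      LinearIndependent F (fun i : Fin k => fun r : Fin k =>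
        suppPascal F σ q k r (c i)) := by
  intro c hc
  by_cases hA : ∀ i, (c i : ℕ) < q
  · have hdet := pascal_core σ hσinj hσ0 k hkq (fun i => (c i : ℕ)) hA
      (fun a b hab => hc (Fin.ext hab))
    have hU : IsUnit (Matrix.of fun r j : Fin k => pascalEntry σ r (c j)) :=
      (Matrix.isUnit_iff_isUnit_det _).mpr (isUnit_iff_ne_zero.mpr hdet)
    have hli := Matrix.linearIndependent_cols_iff_isUnit.mpr hU
    have heq : (fun i : Fin k => fun r : Fin k => suppPascal F σ q k r (c i)) =
        fun i => Matrix.transpose (Matrix.of fun r j : Fin k => pascalEntry σ r (c j)) i := by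
      funext i r
      simp [suppPascal, truncPascal, hA i]
    rw [heq]
    exact hli
  · push_neg at hA
    obtain ⟨i0, hi0⟩ := hA
    have hci0 : (c i0 : ℕ) = q := by have := (c i0).isLt; omega
    obtain ⟨k', rfl⟩ : ∃ k', k = k' + 1 := ⟨k - 1, by omega⟩
    have hlt : ∀ i, i ≠ i0 → (c i : ℕ) < q := by
      intro i hi
      have h1 : c i ≠ c i0 := fun h => hi (hc h)
      have h2 := (c i).isLt
      have h3 : (c i : ℕ) ≠ (c i0 : ℕ) := fun h => h1 (Fin.ext h)
      omega
    set n : Fin k' → ℕ := fun j => (c (i0.succAbove j) : ℕ) with hn_def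
    have hn : ∀ j, n j < q := fun j => hlt _ (Fin.succAbove_ne i0 j)
    have hninj : Function.Injective n := by
      intro a b hab
      exact Fin.succAbove_right_injective (hc (Fin.ext hab))
    have hdet := pascal_core σ hσinj hσ0 k' (by omega) n hn hninj
    rw [Fintype.linearIndependent_iff]
    intro g hg i
    have hg' : ∀ r : Fin (k' + 1),
        ∑ i, g i * suppPascal F σ q (k' + 1) r (c i) = 0 := by
      intro r
      have := congr_fun hg r
      simpa [Finset.sum_apply] using this
    have hw : ∀ j : Fin k', g (i0.succAbove j) = 0 := by
      have hmv : (Matrix.of fun r j : Fin k' => pascalEntry σ r (n j)).mulVec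
          (fun j => g (i0.succAbove j)) = 0 := by
        funext r
        have h1 := hg' (Fin.castSucc r)
        rw [Fin.sum_univ_succAbove _ i0] at h1
        have h2 : suppPascal F σ q (k' + 1) (Fin.castSucc r) (c i0) = 0 := by
          simp only [suppPascal, hci0]
          rw [dif_neg (by omega)]
          rw [if_neg]
          simp only [Fin.coe_castSucc]
          omega
        rw [h2, mul_zero, zero_add] at h1
        simp only [Matrix.mulVec, dotProduct, Matrix.of_apply, Pi.zero_apply]
        rw [← h1]
        apply Finset.sum_congr rfl
        intro j _
        have hj : (c (i0.succAbove j) : ℕ) < q := hn j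
        simp only [suppPascal, truncPascal]
        rw [dif_pos hj, mul_comm, Fin.coe_castSucc]
      have := Matrix.eq_zero_of_mulVec_eq_zero hdet hmv
      intro j
      exact congr_fun this j
    by_cases hii : i = i0
    · subst hii
      have h1 := hg' (Fin.last k')
      rw [Finset.sum_eq_single i] at h1
      · have h2 : suppPascal F σ q (k' + 1) (Fin.last k') (c i) = 1 := by
          simp only [suppPascal, hci0]
          rw [dif_neg (by omega), if_pos (by simp)]
        rw [h2, mul_one] at h1
        exact h1
      · intro b _ hb
        obtain ⟨j, rfl⟩ := Fin.exists_succAbove_eq hb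
        rw [hw j, zero_mul]
      · intro h
        exact absurd (Finset.mem_univ i) h
    · obtain ⟨j, rfl⟩ := Fin.exists_succAbove_eq hii
      exact hw j
end

section
/- Let F be a field, q a positive integer, σ : {0,…,q−1} → F an injective function with σ(0) = 0, and 1 ≤ k ≤ q. Then the truncated Pascal matrix P_{q,k} has the MDS property: every k of its q columns are linearly independent over F. -/
open Polynomial Matrix

/-- Truncation Lemma: every `k` columns of the truncated Pascal matrix `P_{q,k}` are
linearly independent over `F`. -/
theorem truncPascal_MDS (F : Type*) [Field F] (q : ℕ) (hq : 0 < q)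
    (σ : ℕ → F) (hσinj : Set.InjOn σ (Set.Iio q)) (hσ0 : σ 0 = 0)
    (k : ℕ) (hk1 : 1 ≤ k) (hkq : k ≤ q) :
    ∀ c : Fin k → Fin q, Function.Injective c →
      LinearIndependent F (fun i : Fin k => fun r : Fin k =>
        truncPascal F σ q k r (c i)) := by
  intro c hc
  set x : Fin k → F := fun i => σ (c i) with hx
  have hxinj : Function.Injective x := by
    intro i j hij
    exact hc (Fin.ext (hσinj (c i).isLt (c j).isLt hij))
  set p : Fin k → F[X] := fun r => ∏ j ∈ Finset.range r, (X - C (σ j)) with hp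
  have hmonic : ∀ r, (p r).Monic := fun r =>
    monic_prod_of_monic _ _ (fun j _ => monic_X_sub_C _)
  have hdeg : ∀ r : Fin k, (p r).natDegree = r := by
    intro r
    rw [hp]
    rw [Polynomial.natDegree_prod_of_monic _ _ (fun j _ => monic_X_sub_C _)]
    simp [Polynomial.natDegree_X_sub_C]
  set N : Matrix (Fin k) (Fin k) F := fun r i => truncPascal F σ q k r (c i) with hN
  have hσne : ∀ j : ℕ, j + 1 < q → σ (j + 1) ≠ 0 := by
    intro j hj h0
    have hjq : (j + 1 : ℕ) ∈ Set.Iio q := hj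
    have h0q : (0 : ℕ) ∈ Set.Iio q := by simpa using hq
    have := hσinj hjq h0q (by rw [h0, hσ0])
    omega
  have hNeq : N = Matrix.of fun (r i : Fin k) =>
      (∏ j ∈ Finset.range (r : ℕ), (σ (j + 1))⁻¹) * (p r).eval (x i) := by
    ext r i
    simp only [hN, truncPascal, pascalEntry, Matrix.of_apply, hp, Polynomial.eval_prod,
      Polynomial.eval_sub, Polynomial.eval_X, Polynomial.eval_C, ← Finset.prod_mul_distrib]
    exact Finset.prod_congr rfl fun j _ => by rw [div_eq_mul_inv, mul_comm]
  have hdet : N.det ≠ 0 := by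
    have h1 : N.det = (∏ r : Fin k, ∏ j ∈ Finset.range (r : ℕ), (σ (j + 1))⁻¹) *
        (Matrix.of fun (r i : Fin k) => (p r).eval (x i)).det := by
      rw [hNeq]; exact Matrix.det_mul_column _ _
    have hT : (Matrix.of fun (r i : Fin k) => (p r).eval (x i)) =
        (Matrix.of fun (i r : Fin k) => (p r).eval (x i))ᵀ := rfl
    rw [h1, hT, Matrix.det_transpose,
      ← Matrix.det_eval_matrixOfPolynomials_eq_det_vandermonde x p hdeg hmonic]
    apply mul_ne_zero
    · apply Finset.prod_ne_zero_iff.mpr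
      intro r _
      apply Finset.prod_ne_zero_iff.mpr
      intro j hj
      refine inv_ne_zero (hσne j ?_)
      have h2 := Finset.mem_range.mp hj
      have h3 := r.isLt
      omega
    · exact Matrix.det_vandermonde_ne_zero_iff.mpr hxinj
  have hU : IsUnit N := (Matrix.isUnit_iff_isUnit_det N).mpr (isUnit_iff_ne_zero.mpr hdet)
  exact Matrix.linearIndependent_cols_iff_isUnit.mpr hU
end

section
/- Let F be a field, k ≥ 1, and let M be a k×n matrix over F such that (i) every k columns of M are linearly independent, and (ii) every k−1 columns of the (k−1)×n matrix formed by the first k−1 rows of M are linearly independent. Let [M | e_k] denote the k×(n+1) matrix obtained by appending to M the column vector e_k that has a 1 in the last (index k−1) entry and 0 everywhere else. Then every k columns of [M | e_k] are linearly independent over F. -/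
/-- Appending the column `e_k` (a `1` in the last entry, zeros elsewhere) to a `k × n`
matrix `M`. -/
def appendLastUnitCol {F : Type*} [Field F] {k n : ℕ}
    (M : Matrix (Fin k) (Fin n) F) : Matrix (Fin k) (Fin (n + 1)) F :=
  fun r j =>
    if h : (j : ℕ) < n then M r ⟨j, h⟩
    else if (r : ℕ) = k - 1 then 1 else 0

/-- If every `k` columns of a `k × n` matrix `M` are linearly independent, and every
`k − 1` columns of the `(k−1) × n` matrix formed by the first `k − 1` rows of `M` are
linearly independent, then every `k` columns of `[M | e_k]` are linearly independent. -/
theorem append_unit_col_MDS (F : Type*) [Field F] (k n : ℕ) (hk1 : 1 ≤ k)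
    (M : Matrix (Fin k) (Fin n) F)
    (hMDS : ∀ c : Fin k → Fin n, Function.Injective c →
      LinearIndependent F (fun i : Fin k => fun r : Fin k => M r (c i)))
    (hTop : ∀ c : Fin (k - 1) → Fin n, Function.Injective c →
      LinearIndependent F (fun i : Fin (k - 1) => fun r : Fin (k - 1) =>
        M (Fin.castLE (Nat.sub_le k 1) r) (c i))) :
    ∀ c : Fin k → Fin (n + 1), Function.Injective c →
      LinearIndependent F (fun i : Fin k => fun r : Fin k =>
        appendLastUnitCol M r (c i)) := by
  obtain ⟨m, rfl⟩ : ∃ m, k = m + 1 := ⟨k - 1, (Nat.succ_pred_eq_of_pos hk1).symm⟩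
  intro c hc
  by_cases hall : ∀ i, (c i : ℕ) < n
  · have heq : (fun i : Fin (m + 1) => fun r : Fin (m + 1) => appendLastUnitCol M r (c i))
        = fun i => fun r => M r (⟨c i, hall i⟩ : Fin n) := by
      funext i r
      simp [appendLastUnitCol, hall i]
    rw [heq]
    refine hMDS _ fun a b hab => hc (Fin.ext ?_)
    exact Fin.mk.inj_iff.mp hab
  · push_neg at hall
    obtain ⟨i₀, hi₀⟩ := hall
    have hci₀ : (c i₀ : ℕ) = n := le_antisymm (Nat.lt_succ_iff.mp (c i₀).isLt) hi₀
    have hlt : ∀ i, i ≠ i₀ → (c i : ℕ) < n := by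
      intro i hi
      have h1 : c i ≠ c i₀ := fun h => hi (hc h)
      have h2 : (c i : ℕ) ≠ n := fun h => h1 (Fin.ext (h.trans hci₀.symm))
      exact lt_of_le_of_ne (Nat.lt_succ_iff.mp (c i).isLt) h2
    rw [Fintype.linearIndependent_iff]
    intro g hg
    set c' : Fin m → Fin n := fun j => ⟨c (i₀.succAbove j), hlt _ (Fin.succAbove_ne i₀ j)⟩
      with hc'def
    have hc'inj : Function.Injective c' := by
      intro a b hab
      apply Fin.succAbove_right_injective (p := i₀)
      apply hc
      apply Fin.ext
      exact Fin.mk.inj_iff.mp hab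
    have hzero : ∀ j, g (i₀.succAbove j) = 0 := by
      apply Fintype.linearIndependent_iff.mp (hTop c' hc'inj)
      funext r'
      have hrow := congrFun hg (Fin.castLE (Nat.sub_le (m + 1) 1) r')
      simp only [Finset.sum_apply, Pi.smul_apply, smul_eq_mul, Pi.zero_apply] at hrow ⊢
      rw [Fin.sum_univ_succAbove (fun i => g i * appendLastUnitCol M
        (Fin.castLE (Nat.sub_le (m + 1) 1) r') (c i)) i₀] at hrow
      have hv0 : appendLastUnitCol M (Fin.castLE (Nat.sub_le (m + 1) 1) r') (c i₀) = 0 := by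
        have hr' : (r' : ℕ) ≠ m := Nat.ne_of_lt r'.isLt
        simp [appendLastUnitCol, hci₀, hr']
      rw [hv0, mul_zero, zero_add] at hrow
      rw [← hrow]
      apply Finset.sum_congr rfl
      intro j _
      congr 1
      simp [appendLastUnitCol, hlt _ (Fin.succAbove_ne i₀ j), hc'def]
    have hg0 : g i₀ = 0 := by
      have hrow := congrFun hg (Fin.last m)
      simp only [Finset.sum_apply, Pi.smul_apply, smul_eq_mul, Pi.zero_apply] at hrow
      rw [Fin.sum_univ_succAbove (fun i => g i * appendLastUnitCol M (Fin.last m) (c i)) i₀]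
        at hrow
      have hv1 : appendLastUnitCol M (Fin.last m) (c i₀) = 1 := by
        simp [appendLastUnitCol, hci₀]
      rw [hv1, mul_one] at hrow
      have : ∑ j, g (i₀.succAbove j) * appendLastUnitCol M (Fin.last m) (c (i₀.succAbove j))
          = 0 := Finset.sum_eq_zero fun j _ => by rw [hzero j, zero_mul]
      rw [this, add_zero] at hrow
      exact hrow
    intro i
    rcases eq_or_ne i i₀ with rfl | hne
    · exact hg0
    · obtain ⟨j, rfl⟩ := Fin.exists_succAbove_eq hne
      exact hzero j
end

section
/- Let p be a prime, h a positive integer, q = p^h, and let F_q denote the finite field with q elements (e.g., the Galois field GF(p^h)). For every positive integer k ≤ q and every positive integer n ≤ q + 1, there exists a k×n matrix over F_q in which every k columns are linearly independent. (Equivalently, the uniform matroid U_n^k with n ≤ q+1 is representable over F_q.) -/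
/-- Entry of the bordered Vandermonde matrix: a point `some x` of the projective line
contributes `x ^ r`, and the point at infinity `none` contributes the indicator of the
last coordinate. -/
def bvEntry {F : Type*} [Field F] (m : ℕ) (o : Option F) (r : Fin (m + 1)) : F :=
  match o with
  | some x => x ^ (r : ℕ)
  | none => if (r : ℕ) = m then (1 : F) else 0

/-- The bordered Vandermonde matrix associated to an injective family of points of the
projective line (`Option F`): element `some x` yields the row `(1, x, ..., x^m)`, while
`none` yields the row `(0, ..., 0, 1)`. Its determinant is nonzero. -/
lemma bordered_vandermonde_det_ne_zero {F : Type*} [Field F] (m : ℕ)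
    (g : Fin (m + 1) → Option F) (hg : Function.Injective g) :
    (Matrix.of fun i r : Fin (m + 1) => bvEntry m (g i) r).det ≠ 0 := by
  classical
  set A : Matrix (Fin (m + 1)) (Fin (m + 1)) F :=
    Matrix.of fun i r : Fin (m + 1) => bvEntry m (g i) r with hA
  set v : Fin (m + 1) → F := fun i => (g i).getD 0 with hv
  have hsome : ∀ i, g i ≠ none → g i = some (v i) := by
    intro i hi
    cases hgi : g i with
    | none => exact absurd hgi hi
    | some x => simp [hv, hgi]
  by_cases hnone : ∃ j, g j = none
  · obtain ⟨j, hj⟩ := hnone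
    have hsome' : ∀ i, i ≠ j → g i = some (v i) := fun i hi =>
      hsome i (fun hni => hi (hg (hni.trans hj.symm)))
    rw [Matrix.det_succ_row A j, Finset.sum_eq_single (Fin.last m)]
    · have hAj : A j (Fin.last m) = 1 := by
        simp only [hA, Matrix.of_apply, hj, bvEntry, Fin.val_last, if_true]
      have hsub : A.submatrix j.succAbove (Fin.last m).succAbove =
          Matrix.vandermonde (fun i : Fin m => v (j.succAbove i)) := by
        ext i r
        have h1 : g (j.succAbove i) = some (v (j.succAbove i)) :=
          hsome' _ (Fin.succAbove_ne j i)
        have h2 : (Fin.last m).succAbove r = r.castSucc := congrFun Fin.succAbove_last r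
        simp [Matrix.vandermonde, hA, bvEntry, h1, h2]
      have hinj : Function.Injective (fun i : Fin m => v (j.succAbove i)) := by
        intro a b hab
        have : g (j.succAbove a) = g (j.succAbove b) := by
          rw [hsome' _ (Fin.succAbove_ne j a), hsome' _ (Fin.succAbove_ne j b)]
          exact congrArg some hab
        exact (Fin.succAbove_right_injective (p := j)) (hg this)
      have hdet : (A.submatrix j.succAbove (Fin.last m).succAbove).det ≠ 0 := by
        rw [hsub]
        exact Matrix.det_vandermonde_ne_zero_iff.2 hinj
      rw [hAj]
      refine mul_ne_zero (mul_ne_zero ?_ one_ne_zero) hdet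
      exact pow_ne_zero _ (neg_ne_zero.2 one_ne_zero)
    · intro r _ hr
      have hArj : A j r = 0 := by
        have : (r : ℕ) ≠ m := by
          intro hrm
          apply hr
          exact Fin.ext (by simpa [Fin.val_last] using hrm)
        simp only [hA, Matrix.of_apply, hj, bvEntry, if_neg this]
      rw [hArj]; ring
    · intro hmem
      exact absurd (Finset.mem_univ _) hmem
  · push_neg at hnone
    have hAv : A = Matrix.vandermonde v := by
      ext i r
      have h1 : g i = some (v i) := hsome i (hnone i)
      simp [Matrix.vandermonde, hA, bvEntry, h1]
    have hinj : Function.Injective v := by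
      intro a b hab
      apply hg
      rw [hsome a (hnone a), hsome b (hnone b)]
      exact congrArg some hab
    rw [hAv]
    exact Matrix.det_vandermonde_ne_zero_iff.2 hinj

/-- Let `q = p^h` with `p` prime and `h ≥ 1`. For all positive integers `k ≤ q` and
`n ≤ q + 1` there exists a `k × n` matrix over the finite field `F_q = GF(p^h)` in
which every `k` columns are linearly independent (equivalently, the uniform matroid
`U_n^k` with `n ≤ q + 1` is representable over `F_q`). -/
theorem uniform_matroid_representable (p h : ℕ) [Fact p.Prime] (hh : 0 < h)
    (k n : ℕ) (hk1 : 1 ≤ k) (hkq : k ≤ p ^ h) (hn1 : 1 ≤ n) (hn : n ≤ p ^ h + 1) :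
    ∃ M : Matrix (Fin k) (Fin n) (GaloisField p h),
      ∀ c : Fin k → Fin n, Function.Injective c →
        LinearIndependent (GaloisField p h)
          (fun i : Fin k => fun r : Fin k => M r (c i)) := by
  classical
  letI : Fintype (GaloisField p h) := Fintype.ofFinite _
  obtain ⟨m, rfl⟩ : ∃ m, k = m + 1 := ⟨k - 1, (Nat.succ_pred_eq_of_pos hk1).symm⟩
  -- an embedding of the column index set into the projective line over F
  have hcardF : Fintype.card (GaloisField p h) = p ^ h := by
    have := GaloisField.card p h hh.ne'
    simpa [Nat.card_eq_fintype_card] using this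
  have hcard : Fintype.card (Fin n) ≤ Fintype.card (Option (GaloisField p h)) := by
    rw [Fintype.card_option, Fintype.card_fin, hcardF]
    exact hn
  obtain ⟨f⟩ : Nonempty (Fin n ↪ Option (GaloisField p h)) :=
    Function.Embedding.nonempty_of_card_le hcard
  refine ⟨Matrix.of fun r : Fin (m + 1) => fun c : Fin n => bvEntry m (f c) r, ?_⟩
  intro c hc
  have hdet := bordered_vandermonde_det_ne_zero m (fun i => f (c i))
    (f.injective.comp hc)
  have := (Matrix.linearIndependent_rows_iff_isUnit
    (A := Matrix.of fun i r : Fin (m + 1) => bvEntry m (f (c i)) r)).2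
    (by rw [Matrix.isUnit_iff_isUnit_det, isUnit_iff_ne_zero]; exact hdet)
  exact this
end

section
/- Let p be a prime, h a positive integer, q = p^h, and let F_q denote the finite field with q elements (e.g., the Galois field GF(p^h)). For every positive integer k ≤ q there exists a k×(q+1) matrix over F_q in which every k columns are linearly independent and which has at least k(k−1)/2 zero entries. -/
open scoped Classical
open Polynomial Finset Matrix

noncomputable section SparseMDSAux
variable {F : Type*} [Field F]

private def rowPolyAux (b : ℕ → F) (i : ℕ) : F[X] := ∏ l ∈ range i, (X - C (b l))

private lemma rowPolyAux_natDegree (b : ℕ → F) (i : ℕ) : (rowPolyAux b i).natDegree = i := by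
  unfold rowPolyAux
  rw [natDegree_prod _ _ (fun l _ => X_sub_C_ne_zero (b l))]
  simp

private lemma rowPolyAux_monic (b : ℕ → F) (i : ℕ) : (rowPolyAux b i).Monic :=
  monic_prod_of_monic _ _ fun l _ => monic_X_sub_C (b l)

private lemma rowPolyAux_coeff_self (b : ℕ → F) (i : ℕ) : (rowPolyAux b i).coeff i = 1 := by
  have := (rowPolyAux_monic b i).coeff_natDegree
  rwa [rowPolyAux_natDegree] at this

private lemma rowPolyAux_coeff_zero (b : ℕ → F) {i j : ℕ} (h : i < j) :
    (rowPolyAux b i).coeff j = 0 :=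
  coeff_eq_zero_of_natDegree_lt (by rwa [rowPolyAux_natDegree])

private lemma rowPolyAux_eval_zero (b : ℕ → F) {i j : ℕ} (h : j < i) :
    (rowPolyAux b i).eval (b j) = 0 := by
  rw [show rowPolyAux b i = ∏ l ∈ range i, (X - C (b l)) from rfl, eval_prod]
  exact Finset.prod_eq_zero (mem_range.2 h) (by simp)

private def sparseM (b : ℕ → F) (q k : ℕ) : Matrix (Fin k) (Fin (q+1)) F :=
  fun r j => if (j : ℕ) < q then (rowPolyAux b r).eval (b j) else (rowPolyAux b r).coeff (k-1)

private def lowM (b : ℕ → F) (k : ℕ) : Matrix (Fin k) (Fin k) F :=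
  fun r l => (rowPolyAux b r).coeff l

private def vanM (b : ℕ → F) (q k : ℕ) : Matrix (Fin k) (Fin (q+1)) F :=
  fun l j => if (j : ℕ) < q then (b j)^(l:ℕ) else (if (l:ℕ) = k-1 then 1 else 0)

private lemma sparseM_eq_mul (b : ℕ → F) (q k : ℕ) : sparseM b q k = lowM b k * vanM b q k := by
  ext r j
  rw [Matrix.mul_apply]
  by_cases hj : (j : ℕ) < q
  · simp only [sparseM, vanM, lowM, if_pos hj]
    rw [Fin.sum_univ_eq_sum_range (fun l => (rowPolyAux b r).coeff l * (b j)^l),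
      eval_eq_sum_range' (by rw [rowPolyAux_natDegree]; exact r.2)]
  · simp only [sparseM, vanM, lowM, if_neg hj]
    have hk1 : k - 1 < k := Nat.sub_lt r.pos one_pos
    rw [Finset.sum_eq_single (⟨k-1, hk1⟩ : Fin k)]
    · simp
    · intro l _ hl
      rw [if_neg, mul_zero]
      intro hc
      exact hl (Fin.ext hc)
    · simp

private lemma det_lowM (b : ℕ → F) (k : ℕ) : (lowM b k).det = 1 := by
  rw [Matrix.det_of_lowerTriangular (lowM b k)
    (fun i j h => rowPolyAux_coeff_zero b (by exact_mod_cast h))]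
  simp [lowM, rowPolyAux_coeff_self]

private lemma det_vanM_submatrix (b : ℕ → F) (q k : ℕ)
    (hb : ∀ m n, m < q → n < q → b m = b n → m = n)
    (c : Fin k → Fin (q+1)) (hc : Function.Injective c) :
    ((vanM b q k).submatrix id c).det ≠ 0 := by
  by_cases hinf : ∃ i, (c i : ℕ) = q
  · obtain ⟨i0, hi0⟩ := hinf
    obtain ⟨n, rfl⟩ : ∃ n, k = n + 1 := ⟨k - 1, by have := i0.pos; omega⟩
    have hlt : ∀ j : Fin n, (c (i0.succAbove j) : ℕ) < q := by
      intro j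
      have h1 : (c (i0.succAbove j) : ℕ) < q + 1 := (c (i0.succAbove j)).2
      rcases Nat.lt_or_ge (c (i0.succAbove j) : ℕ) q with h | h
      · exact h
      · exfalso
        have : c (i0.succAbove j) = c i0 := Fin.ext (by omega)
        exact Fin.succAbove_ne i0 j (hc this)
    rw [Matrix.det_succ_column _ i0, Finset.sum_eq_single (Fin.last n)]
    · have hB : ((vanM b q (n+1)).submatrix id c).submatrix (Fin.last n).succAbove i0.succAbove
          = (Matrix.vandermonde fun j => b (c (i0.succAbove j)))ᵀ := by
        ext l j
        simp only [Matrix.submatrix_apply, id_eq, Matrix.transpose_apply, Matrix.vandermonde,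
          Fin.succAbove_last_apply, vanM, if_pos (hlt j), Fin.coe_castSucc, Matrix.of_apply]
      rw [hB, Matrix.det_transpose]
      have hsub : ((vanM b q (n+1)).submatrix id c) (Fin.last n) i0 = 1 := by
        simp only [Matrix.submatrix_apply, id_eq, vanM, if_neg (by omega : ¬ (c i0 : ℕ) < q)]
        simp
      rw [hsub]
      refine mul_ne_zero (mul_ne_zero (pow_ne_zero _ (by norm_num)) one_ne_zero) ?_
      rw [Matrix.det_vandermonde_ne_zero_iff]
      intro j j' hjj
      have := hb _ _ (hlt j) (hlt j') hjj
      exact Fin.succAbove_right_injective (hc (Fin.ext this))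
    · intro l _ hl
      have : ((vanM b q (n+1)).submatrix id c) l i0 = 0 := by
        simp only [Matrix.submatrix_apply, id_eq, vanM, if_neg (by omega : ¬ (c i0 : ℕ) < q)]
        rw [if_neg]
        intro hcon
        exact hl (Fin.ext (by simpa using hcon))
      rw [this, mul_zero, zero_mul]
    · simp
  · push_neg at hinf
    have hlt : ∀ i, (c i : ℕ) < q := fun i => by
      have h1 := (c i).2; have h2 := hinf i; omega
    have hA : (vanM b q k).submatrix id c = (Matrix.vandermonde fun i => b (c i))ᵀ := by
      ext l i
      simp only [Matrix.submatrix_apply, id_eq, Matrix.transpose_apply, Matrix.vandermonde,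
        vanM, if_pos (hlt i), Matrix.of_apply]
    rw [hA, Matrix.det_transpose, Matrix.det_vandermonde_ne_zero_iff]
    intro i i' hii
    exact hc (Fin.ext (hb _ _ (hlt i) (hlt i') hii))

private theorem sparse_aux (q k : ℕ) (hk1 : 1 ≤ k) (hkq : k ≤ q) (b : ℕ → F)
    (hb : ∀ m n, m < q → n < q → b m = b n → m = n) :
    ∃ M : Matrix (Fin k) (Fin (q + 1)) F,
      (∀ c : Fin k → Fin (q + 1), Function.Injective c →
        LinearIndependent F (fun i : Fin k => fun r : Fin k => M r (c i))) ∧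
      k * (k - 1) / 2 ≤
        ((Finset.univ : Finset (Fin k × Fin (q + 1))).filter
          (fun e : Fin k × Fin (q + 1) => M e.1 e.2 = 0)).card := by
  refine ⟨sparseM b q k, ?_, ?_⟩
  · intro c hc
    have key : (fun i : Fin k => fun r : Fin k => sparseM b q k r (c i))
        = ((sparseM b q k).submatrix id c)ᵀ.row := rfl
    rw [key, Matrix.linearIndependent_rows_iff_isUnit, Matrix.isUnit_iff_isUnit_det,
      Matrix.det_transpose, isUnit_iff_ne_zero]
    have hfac : (sparseM b q k).submatrix id c
        = lowM b k * (vanM b q k).submatrix id c := by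
      rw [sparseM_eq_mul]
      ext r i
      simp [Matrix.mul_apply, Matrix.submatrix_apply]
    rw [hfac, Matrix.det_mul, det_lowM, one_mul]
    exact det_vanM_submatrix b q k hb c hc
  · have hsubset : (Finset.univ : Finset (Fin k × Fin (q + 1))).filter
        (fun e => (e.2 : ℕ) < (e.1 : ℕ)) ⊆
        (Finset.univ : Finset (Fin k × Fin (q + 1))).filter
          (fun e => sparseM b q k e.1 e.2 = 0) := by
      intro e he
      rw [Finset.mem_filter] at he ⊢
      refine ⟨he.1, ?_⟩
      have hlt : (e.2 : ℕ) < (e.1 : ℕ) := he.2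
      have hq : (e.2 : ℕ) < q := by have := e.1.2; omega
      simp only [sparseM, if_pos hq]
      exact rowPolyAux_eval_zero b hlt
    refine le_trans ?_ (Finset.card_le_card hsubset)
    have hcount : ((Finset.univ : Finset (Fin k × Fin (q + 1))).filter
        (fun e => (e.2 : ℕ) < (e.1 : ℕ))).card = ∑ r ∈ range k, r := by
      rw [Finset.card_filter, Fintype.sum_prod_type]
      rw [Fin.sum_univ_eq_sum_range (fun r => ∑ j : Fin (q+1), if (j : ℕ) < r then 1 else 0)]
      refine Finset.sum_congr rfl fun r hr => ?_
      rw [Fin.sum_univ_eq_sum_range (fun j => if j < r then 1 else 0)]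
      rw [← Finset.card_filter]
      have : (range (q+1)).filter (fun j => j < r) = range r := by
        ext x
        simp only [Finset.mem_filter, Finset.mem_range]
        have : r < k := Finset.mem_range.1 hr
        omega
      rw [this, Finset.card_range]
    rw [hcount]
    have h2 : (∑ r ∈ range k, r) * 2 = k * (k - 1) := Finset.sum_range_id_mul_two k
    omega

end SparseMDSAux

/-- Let `q = p^h` with `p` prime and `h ≥ 1`. For every positive integer `k ≤ q` there
exists a `k × (q+1)` matrix over the finite field `F_q = GF(p^h)` in which every `k`
columns are linearly independent and which has at least `k(k−1)/2` zero entries. -/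
theorem sparse_MDS_matrix_exists (p h : ℕ) [Fact p.Prime] (hh : 0 < h)
    (k : ℕ) (hk1 : 1 ≤ k) (hkq : k ≤ p ^ h) :
    ∃ M : Matrix (Fin k) (Fin (p ^ h + 1)) (GaloisField p h),
      (∀ c : Fin k → Fin (p ^ h + 1), Function.Injective c →
        LinearIndependent (GaloisField p h)
          (fun i : Fin k => fun r : Fin k => M r (c i))) ∧
      k * (k - 1) / 2 ≤
        ((Finset.univ : Finset (Fin k × Fin (p ^ h + 1))).filter
          (fun e : Fin k × Fin (p ^ h + 1) => M e.1 e.2 = 0)).card := by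
  haveI : Fintype (GaloisField p h) := Fintype.ofFinite _
  have hcard : Fintype.card (GaloisField p h) = p ^ h := by
    rw [← Nat.card_eq_fintype_card]; exact GaloisField.card p h hh.ne'
  let e : GaloisField p h ≃ Fin (p ^ h) := Fintype.equivFinOfCardEq hcard
  set b : ℕ → GaloisField p h :=
    fun n => if hn : n < p ^ h then e.symm ⟨n, hn⟩ else 0 with hbdef
  have hb : ∀ m n, m < p ^ h → n < p ^ h → b m = b n → m = n := by
    intro m n hm hn hmn
    rw [hbdef] at hmn
    simp only [dif_pos hm, dif_pos hn] at hmn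
    exact congrArg Fin.val (e.symm.injective hmn)
  exact sparse_aux (p ^ h) k hk1 hkq b hb
end
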